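/- Let Z ~ SVG(1,σ,0) (density p(x) = K_0(|x|/σ)/(πσ)). Then for every α with 0 < α/σ < 0.729, P(0 ≤ Z ≤ α) ≤ (2α/(πσ)) (1 + log(σ/α)). -/

import Mathlib

open MeasureTheory ProbabilityTheory Real

/-- The modified Bessel function of the second kind of order `0`,
`K_0(x) = ∫₀^∞ e^{-x cosh t} dt`. -/
noncomputable def besselK0 (x : ℝ) : ℝ :=
  ∫ t in Set.Ioi (0 : ℝ), Real.exp (-x * Real.cosh t)

lemma half_exp_le_cosh (t : ℝ) : Real.exp t / 2 ≤ Real.cosh t := by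
  rw [Real.cosh_eq]
  have := Real.exp_nonneg (-t)
  linarith

lemma integrableOn_exp_neg_mul_cosh {y : ℝ} (hy : 0 < y) :
    IntegrableOn (fun t => Real.exp (-y * Real.cosh t)) (Set.Ioi (0:ℝ)) := by
  apply Integrable.mono'
    (g := fun t => Real.exp (-(y/2)) * Real.exp (-(y/2) * t))
  · exact (exp_neg_integrableOn_Ioi 0 (by positivity)).const_mul _
  · exact ((Real.continuous_exp.comp ((continuous_const.mul Real.continuous_cosh))).aestronglyMeasurable).restrict
  · refine ae_of_all _ fun t => ?_
    rw [Real.norm_eq_abs, abs_of_nonneg (Real.exp_nonneg _), ← Real.exp_add]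
    apply Real.exp_le_exp.2
    have h1 : (1 + t) / 2 ≤ Real.cosh t := by
      have := half_exp_le_cosh t
      have := Real.add_one_le_exp t
      linarith
    nlinarith [Real.cosh_pos t]

lemma besselK0_le {y : ℝ} (hy : 0 < y) (hy2 : y < 2) :
    besselK0 y ≤ Real.log (2 / y) + Real.exp (-1) := by
  set f : ℝ → ℝ := fun t => Real.exp (-y * Real.cosh t) with hf
  set T := Real.log (2 / y) with hT
  have hTpos : 0 < T := Real.log_pos (by rw [lt_div_iff₀ hy]; linarith)
  have hint := integrableOn_exp_neg_mul_cosh hy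
  have hsplit : Set.Ioi (0:ℝ) = Set.Ioc 0 T ∪ Set.Ioi T :=
    (Set.Ioc_union_Ioi_eq_Ioi hTpos.le).symm
  have h1 : IntegrableOn f (Set.Ioc 0 T) := hint.mono_set (by rw [hsplit]; exact Set.subset_union_left)
  have h2 : IntegrableOn f (Set.Ioi T) := hint.mono_set (by rw [hsplit]; exact Set.subset_union_right)
  have key : besselK0 y = (∫ t in Set.Ioc 0 T, f t) + ∫ t in Set.Ioi T, f t := by
    rw [besselK0, hsplit]
    exact setIntegral_union (Set.Ioc_disjoint_Ioi le_rfl) measurableSet_Ioi h1 h2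
  rw [key]
  have b1 : (∫ t in Set.Ioc 0 T, f t) ≤ T := by
    have : (∫ t in Set.Ioc 0 T, f t) ≤ ∫ _ in Set.Ioc 0 T, (1:ℝ) := by
      apply setIntegral_mono_on h1 (integrableOn_const (by simp [Real.volume_Ioc])) measurableSet_Ioc
      intro x _
      rw [hf]
      show Real.exp (-y * Real.cosh x) ≤ 1
      exact Real.exp_le_one_iff.2 (by nlinarith [Real.cosh_pos x])
    calc (∫ t in Set.Ioc 0 T, f t) ≤ ∫ _ in Set.Ioc 0 T, (1:ℝ) := this
      _ = T := by
        rw [setIntegral_const, measureReal_def, Real.volume_Ioc, ENNReal.toReal_ofReal (by linarith)]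
        simp
  have b2 : (∫ t in Set.Ioi T, f t) ≤ Real.exp (-1) := by
    have hgint : IntegrableOn (fun t => Real.exp (T - 1) * Real.exp (-t)) (Set.Ioi T) := by
      have := exp_neg_integrableOn_Ioi T (zero_lt_one (α := ℝ))
      have := this.const_mul (Real.exp (T - 1))
      simp only [neg_mul, one_mul] at this
      exact this
    have : (∫ t in Set.Ioi T, f t) ≤ ∫ t in Set.Ioi T, Real.exp (T - 1) * Real.exp (-t) := by
      apply setIntegral_mono_on h2 hgint measurableSet_Ioi
      intro t ht
      rw [hf, ← Real.exp_add]
      apply Real.exp_le_exp.2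
      have he : Real.exp (t - T) ≤ y * Real.cosh t := by
        have h0 : Real.exp (t - T) = y * (Real.exp t / 2) := by
          rw [hT, Real.exp_sub, Real.exp_log (by positivity)]
          field_simp
        rw [h0]
        exact mul_le_mul_of_nonneg_left (half_exp_le_cosh t) hy.le
      have := Real.add_one_le_exp (t - T)
      linarith
    calc (∫ t in Set.Ioi T, f t) ≤ ∫ t in Set.Ioi T, Real.exp (T - 1) * Real.exp (-t) := this
      _ = Real.exp (T - 1) * Real.exp (-T) := by
        rw [integral_const_mul, integral_exp_neg_Ioi]
      _ = Real.exp (-1) := by rw [← Real.exp_add]; ring_nf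
  linarith

lemma besselK0_lb {y : ℝ} (hy : 0 < y) (hy2 : y ≤ 2) :
    Real.exp (-2 * Real.cosh 1) ≤ besselK0 y := by
  set f : ℝ → ℝ := fun t => Real.exp (-y * Real.cosh t) with hf
  have hint := integrableOn_exp_neg_mul_cosh hy
  have h1 : IntegrableOn f (Set.Ioc 0 1) := hint.mono_set Set.Ioc_subset_Ioi_self
  have step1 : Real.exp (-2 * Real.cosh 1) ≤ ∫ t in Set.Ioc (0:ℝ) 1, f t := by
    have : (∫ _ in Set.Ioc (0:ℝ) 1, Real.exp (-2 * Real.cosh 1)) ≤ ∫ t in Set.Ioc (0:ℝ) 1, f t := by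
      apply setIntegral_mono_on (integrableOn_const (by simp [Real.volume_Ioc])) h1 measurableSet_Ioc
      intro t ht
      apply Real.exp_le_exp.2
      have hc : Real.cosh t ≤ Real.cosh 1 := by
        rw [Real.cosh_le_cosh]
        rw [abs_of_nonneg ht.1.le, abs_one]
        exact ht.2
      nlinarith [Real.cosh_pos t]
    calc Real.exp (-2 * Real.cosh 1)
        = ∫ _ in Set.Ioc (0:ℝ) 1, Real.exp (-2 * Real.cosh 1) := by
          rw [setIntegral_const, measureReal_def, Real.volume_Ioc]; norm_num
      _ ≤ _ := this
  have step2 : (∫ t in Set.Ioc (0:ℝ) 1, f t) ≤ besselK0 y := by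
    apply setIntegral_mono_set hint (ae_of_all _ fun t => Real.exp_nonneg _)
    exact (Set.Ioc_subset_Ioi_self).eventuallyLE
  linarith

/-- For `Z ~ SVG(1,σ,0)`, i.e. with density `p(x) = K_0(|x|/σ)/(πσ)`:
if `0 < α/σ < 0.729` then `P(0 ≤ Z ≤ α) ≤ (2α/(πσ)) (1 + log(σ/α))`. -/
theorem svg_one_small_interval_bound
    {Ω : Type*} [MeasureSpace Ω] [IsProbabilityMeasure (ℙ : Measure Ω)]
    (σ : ℝ) (hσ : 0 < σ) (Z : Ω → ℝ)
    (hZ : Measure.map Z ℙ =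
      volume.withDensity fun x => ENNReal.ofReal (besselK0 (|x| / σ) / (π * σ))) :
    ∀ α : ℝ, 0 < α / σ → α / σ < 0.729 →
      (ℙ {ω | 0 ≤ Z ω ∧ Z ω ≤ α}).toReal ≤ 2 * α / (π * σ) * (1 + Real.log (σ / α)) := by
  intro α hα1 hα2
  have hπσ : 0 < π * σ := mul_pos Real.pi_pos hσ
  have hα : 0 < α := by
    have := mul_pos hα1 hσ
    rwa [div_mul_cancel₀ _ hσ.ne'] at this
  have hα729 : α < 0.729 * σ := by
    have := (div_lt_iff₀ hσ).1 hα2; linarith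
  -- Z is a.e.-measurable
  have hAE : AEMeasurable Z ℙ := by
    by_contra h
    have h0 : Measure.map Z ℙ = 0 := Measure.map_of_not_aemeasurable h
    rw [h0] at hZ
    have hcontra := congrArg (fun μ => μ (Set.Icc σ (2*σ))) hZ
    simp only [Measure.coe_zero, Pi.zero_apply] at hcontra
    rw [withDensity_apply _ measurableSet_Icc] at hcontra
    have hlb : ENNReal.ofReal (Real.exp (-2 * Real.cosh 1) / (π * σ)) * volume (Set.Icc σ (2*σ))
        ≤ ∫⁻ x in Set.Icc σ (2*σ), ENNReal.ofReal (besselK0 (|x| / σ) / (π * σ)) := by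
      rw [← setLIntegral_const]
      apply lintegral_mono_ae
      refine ae_restrict_of_forall_mem measurableSet_Icc fun x hx => ?_
      apply ENNReal.ofReal_le_ofReal
      apply (div_le_div_iff_of_pos_right hπσ).2
      have hx1 : (0:ℝ) < x := lt_of_lt_of_le hσ hx.1
      rw [abs_of_nonneg hx1.le]
      exact besselK0_lb (by positivity) (by rw [div_le_iff₀ hσ]; linarith [hx.2])
    rw [← hcontra] at hlb
    have h1 : (0:ℝ) < Real.exp (-2 * Real.cosh 1) / (π * σ) := by positivity
    have h2 : volume (Set.Icc σ (2*σ)) = ENNReal.ofReal σ := by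
      rw [Real.volume_Icc]; ring_nf
    rw [h2] at hlb
    have h3 : ENNReal.ofReal (Real.exp (-2 * Real.cosh 1) / (π * σ)) * ENNReal.ofReal σ ≠ 0 :=
      (ENNReal.mul_pos (ENNReal.ofReal_pos.2 h1).ne' (ENNReal.ofReal_pos.2 hσ).ne').ne'
    exact h3 (le_antisymm hlb zero_le)
  -- rewrite the probability as a lintegral
  have hset : {ω | 0 ≤ Z ω ∧ Z ω ≤ α} = Z ⁻¹' (Set.Icc 0 α) := rfl
  have hmeas : ℙ {ω | 0 ≤ Z ω ∧ Z ω ≤ α}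
      = ∫⁻ x in Set.Ioc 0 α, ENNReal.ofReal (besselK0 (|x| / σ) / (π * σ)) := by
    rw [hset, ← Measure.map_apply_of_aemeasurable hAE measurableSet_Icc, hZ,
      withDensity_apply _ measurableSet_Icc]
    exact (setLIntegral_congr MeasureTheory.Ioc_ae_eq_Icc).symm
  -- the comparison function
  set c : ℝ := Real.log (2*σ) + Real.exp (-1) with hc
  set h : ℝ → ℝ := fun x => c - Real.log x with hh
  have hhnn : ∀ x ∈ Set.Ioc (0:ℝ) α, 0 ≤ h x := by
    intro x hx
    have h1 : Real.log x ≤ Real.log (2*σ) :=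
      Real.log_le_log hx.1 (by linarith [hx.2])
    have := Real.exp_nonneg (-1)
    simp only [hh, hc]; linarith
  -- pointwise bound
  have hbound : (∫⁻ x in Set.Ioc 0 α, ENNReal.ofReal (besselK0 (|x| / σ) / (π * σ)))
      ≤ ∫⁻ x in Set.Ioc 0 α, ENNReal.ofReal (h x / (π * σ)) := by
    apply lintegral_mono_ae
    refine ae_restrict_of_forall_mem measurableSet_Ioc fun x hx => ?_
    apply ENNReal.ofReal_le_ofReal
    apply (div_le_div_iff_of_pos_right hπσ).2
    rw [abs_of_nonneg hx.1.le]
    have hy : 0 < x / σ := div_pos hx.1 hσ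
    have hy2 : x / σ < 2 := by
      have : x / σ ≤ α / σ := by apply (div_le_div_iff_of_pos_right hσ).2 hx.2
      linarith
    have hkey := besselK0_le hy hy2
    have hlog : Real.log (2 / (x / σ)) = Real.log (2*σ) - Real.log x := by
      rw [div_div_eq_mul_div, Real.log_div (by positivity) hx.1.ne']
    rw [hlog] at hkey
    simp only [hh, hc]; linarith
  -- FTC computation of the comparison integral
  set F : ℝ → ℝ := fun x => c * x - (x * Real.log x - x) with hF
  have hFcont : ContinuousOn F (Set.Icc 0 α) :=
    ((continuous_const.mul continuous_id).sub
      (Real.continuous_mul_log.sub continuous_id)).continuousOn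
  have hFderiv : ∀ x ∈ Set.Ioo (0:ℝ) α, HasDerivAt F (h x) x := by
    intro x hx
    have h1 : HasDerivAt (fun x : ℝ => c * x) c x := by
      simpa using (hasDerivAt_id x).const_mul c
    have h2 : HasDerivAt (fun x : ℝ => x * Real.log x - x) (Real.log x) x := by
      have := (Real.hasDerivAt_mul_log hx.1.ne').sub (hasDerivAt_id x)
      exact this.congr_deriv (by ring)
    exact h1.sub h2
  have hhint : IntegrableOn h (Set.Ioc 0 α) := by
    apply intervalIntegral.integrableOn_deriv_of_nonneg hFcont hFderiv
    intro x hx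
    exact hhnn x ⟨hx.1, hx.2.le⟩
  have hval : (∫ x in Set.Ioc 0 α, h x) = F α := by
    have hii : IntervalIntegrable h volume 0 α :=
      (intervalIntegrable_iff_integrableOn_Ioc_of_le hα.le).2 hhint
    have := intervalIntegral.integral_eq_sub_of_hasDeriv_right_of_le hα.le hFcont
      (fun x hx => (hFderiv x hx).hasDerivWithinAt) hii
    rw [intervalIntegral.integral_of_le hα.le] at this
    rw [this]
    simp [hF]
  -- convert to a real integral
  have hgeq : (∫⁻ x in Set.Ioc 0 α, ENNReal.ofReal (h x / (π * σ)))
      = ENNReal.ofReal (F α / (π * σ)) := by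
    rw [← ofReal_integral_eq_lintegral_ofReal (hhint.div_const _)
      (ae_restrict_of_forall_mem measurableSet_Ioc fun x hx => div_nonneg (hhnn x hx) hπσ.le)]
    congr 1
    rw [integral_div, hval]
  have hFα : F α = α * (c + 1 - Real.log α) := by simp only [hF]; ring
  have hFαnn : 0 ≤ F α / (π * σ) := by
    have := hhnn α ⟨hα, le_refl α⟩
    rw [hFα]
    simp only [hh] at this
    apply div_nonneg _ hπσ.le
    nlinarith
  -- put it together
  have hfinal : (ℙ {ω | 0 ≤ Z ω ∧ Z ω ≤ α}).toReal ≤ F α / (π * σ) := by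
    rw [hmeas]
    calc (∫⁻ x in Set.Ioc 0 α, ENNReal.ofReal (besselK0 (|x| / σ) / (π * σ))).toReal
        ≤ (ENNReal.ofReal (F α / (π * σ))).toReal := by
          apply ENNReal.toReal_mono ENNReal.ofReal_ne_top
          rw [← hgeq]; exact hbound
      _ = F α / (π * σ) := ENNReal.toReal_ofReal hFαnn
  refine hfinal.trans ?_
  -- final arithmetic
  have hlogq : Real.log (α / σ) ≤ 0.729 - 1 := by
    have h1 := Real.log_le_sub_one_of_pos hα1
    linarith
  rw [Real.log_div hα.ne' hσ.ne'] at hlogq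
  have hlog2 : Real.log 2 < 0.6931471808 := Real.log_two_lt_d9
  have hexp : Real.exp (-1) ≤ 0.37 := by
    have hm : Real.exp (-1) * Real.exp 1 = 1 := by rw [← Real.exp_add]; norm_num
    nlinarith [Real.exp_one_gt_d9, Real.exp_pos (-1)]
  have hlogsum : Real.log (2*σ) = Real.log 2 + Real.log σ :=
    Real.log_mul two_ne_zero hσ.ne'
  have hgoal : α * (c + 1 - Real.log α) ≤ 2 * α * (1 + (Real.log σ - Real.log α)) := by
    have hs : Real.log 2 + Real.exp (-1) - 1 ≤ Real.log σ - Real.log α := by linarith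
    simp only [hc, hlogsum]
    nlinarith [mul_le_mul_of_nonneg_left hs hα.le]
  rw [hFα, Real.log_div hσ.ne' hα.ne']
  calc α * (c + 1 - Real.log α) / (π * σ)
      ≤ 2 * α * (1 + (Real.log σ - Real.log α)) / (π * σ) := by
        exact (div_le_div_iff_of_pos_right hπσ).2 hgoal
    _ = 2 * α / (π * σ) * (1 + (Real.log σ - Real.log α)) := by ring
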